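/- Let n ≥ 2 be an integer. Then the number of even parity-alternate permutations of [n] equals the number of odd parity-alternate permutations of [n]. -/

import Mathlib

open Finset

/-- Number of ascents of a permutation of `[n]` (positions `i` with `a_i < a_{i+1}`). -/
def ascents {n : ℕ} (A : Equiv.Perm (Fin n)) : ℕ :=
  (univ.filter fun i : Fin n => ∃ h : i.val + 1 < n, A i < A ⟨i.val + 1, h⟩).card

/-- Number of inversions of a permutation. -/
def invNum {n : ℕ} (A : Equiv.Perm (Fin n)) : ℕ :=
  (univ.filter fun p : Fin n × Fin n => p.1 < p.2 ∧ A p.2 < A p.1).card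

/-- A permutation is parity-alternate if consecutive entries have different parity. -/
def IsPAP {n : ℕ} (A : Equiv.Perm (Fin n)) : Prop :=
  ∀ i : Fin n, ∀ h : i.val + 1 < n, (A i).val % 2 ≠ (A ⟨i.val + 1, h⟩).val % 2

instance {n : ℕ} (A : Equiv.Perm (Fin n)) : Decidable (IsPAP A) := by
  unfold IsPAP; infer_instance

/-- `P_{n,k}`: number of even parity-alternate permutations of `[n]` with `k` ascents. -/
def papEven (n k : ℕ) : ℕ :=
  (univ.filter fun A : Equiv.Perm (Fin n) => IsPAP A ∧ ascents A = k ∧ Even (invNum A)).card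

/-- `Q_{n,k}`: number of odd parity-alternate permutations of `[n]` with `k` ascents. -/
def papOdd (n k : ℕ) : ℕ :=
  (univ.filter fun A : Equiv.Perm (Fin n) => IsPAP A ∧ ascents A = k ∧ Odd (invNum A)).card

/-- `S_{n,k}`: number of parity-alternate permutations of `[n]` with `k` ascents. -/
def papTotal (n k : ℕ) : ℕ :=
  (univ.filter fun A : Equiv.Perm (Fin n) => IsPAP A ∧ ascents A = k).card

/-- `R_{n,k} = P_{n,k} - Q_{n,k}`. -/
def papSigned (n k : ℕ) : ℤ := (papEven n k : ℤ) - papOdd n k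

/-- `B_{n,k}`: number of even permutations of `[n]` with `k` ascents. -/
def eulerEven (n k : ℕ) : ℕ :=
  (univ.filter fun A : Equiv.Perm (Fin n) => ascents A = k ∧ Even (invNum A)).card

/-- `C_{n,k}`: number of odd permutations of `[n]` with `k` ascents. -/
def eulerOdd (n k : ℕ) : ℕ :=
  (univ.filter fun A : Equiv.Perm (Fin n) => ascents A = k ∧ Odd (invNum A)).card

/-- `D_{n,k} = B_{n,k} - C_{n,k}`: the signed Eulerian number. -/
def eulerSigned (n k : ℕ) : ℤ := (eulerEven n k : ℤ) - eulerOdd n k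

lemma signAux_eq_pow {n : ℕ} (f : Equiv.Perm (Fin n)) :
    Equiv.Perm.signAux f = (-1 : ℤˣ) ^ invNum f := by
  unfold Equiv.Perm.signAux invNum
  rw [Finset.prod_ite, Finset.prod_const, Finset.prod_const, one_pow, mul_one]
  congr 1
  apply Finset.card_nbij' (fun x => (x.2, x.1)) (fun p => ⟨p.2, p.1⟩)
  · rintro ⟨a, b⟩ hx
    simp only [Finset.mem_coe, Finset.mem_filter, Equiv.Perm.mem_finPairsLT] at hx ⊢
    refine ⟨Finset.mem_univ _, hx.1, ?_⟩
    rcases lt_or_eq_of_le hx.2 with h | h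
    · exact h
    · exact absurd (f.injective h) (ne_of_gt hx.1)
  · rintro ⟨a, b⟩ hp
    simp only [Finset.mem_coe, Finset.mem_filter, Equiv.Perm.mem_finPairsLT, Finset.mem_univ, true_and] at hp ⊢
    exact ⟨hp.1, le_of_lt hp.2⟩
  · rintro ⟨a, b⟩ _; rfl
  · rintro ⟨a, b⟩ _; rfl

lemma neg_one_pow_eq_one_iff_even' {k : ℕ} : ((-1 : ℤˣ) ^ k = 1) ↔ Even k := by
  constructor
  · intro h
    by_contra ho
    rw [Nat.not_even_iff_odd] at ho
    rw [ho.neg_one_pow] at h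
    exact absurd h (by decide)
  · exact fun h => h.neg_one_pow

lemma invNum_flip {n : ℕ} {v w : Fin n} (hvw : v ≠ w) (A : Equiv.Perm (Fin n)) :
    (Even (invNum (Equiv.swap v w * A)) ↔ Odd (invNum A)) := by
  have h := Equiv.Perm.signAux_mul (Equiv.swap v w) A
  rw [Equiv.Perm.signAux_swap hvw, signAux_eq_pow, signAux_eq_pow, neg_mul, one_mul] at h
  constructor
  · intro he
    rw [Nat.odd_iff, ← Nat.not_even_iff]
    intro ho
    rw [he.neg_one_pow, ho.neg_one_pow] at h
    exact absurd h (by decide)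
  · intro ho
    rw [ho.neg_one_pow, neg_neg] at h
    exact neg_one_pow_eq_one_iff_even'.mp h

lemma invNum_flip' {n : ℕ} {v w : Fin n} (hvw : v ≠ w) (A : Equiv.Perm (Fin n)) :
    (Odd (invNum (Equiv.swap v w * A)) ↔ Even (invNum A)) := by
  rw [Nat.odd_iff, ← Nat.not_even_iff, invNum_flip hvw, Nat.not_odd_iff_even]

theorem card_even_pap_eq_card_odd_pap (n : ℕ) (hn : 2 ≤ n) :
    (univ.filter fun A : Equiv.Perm (Fin n) => IsPAP A ∧ Even (invNum A)).card
      = (univ.filter fun A : Equiv.Perm (Fin n) => IsPAP A ∧ Odd (invNum A)).card := by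
  rcases lt_or_eq_of_le hn with h3 | h2
  · -- n ≥ 3 : use swap of the values 0 and 2, which have the same parity
    have h0 : (0 : ℕ) < n := by omega
    have h2' : (2 : ℕ) < n := h3
    set v : Fin n := ⟨0, h0⟩
    set w : Fin n := ⟨2, h2'⟩
    have hvw : v ≠ w := by simp [v, w, Fin.ext_iff]
    set c := Equiv.swap v w with hc
    have hpar : ∀ x : Fin n, (c x).val % 2 = x.val % 2 := by
      intro x
      rcases eq_or_ne x v with rfl | hv
      · rw [hc, Equiv.swap_apply_left]; simp [v, w]
      rcases eq_or_ne x w with rfl | hw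
      · rw [hc, Equiv.swap_apply_right]; simp [v, w]
      · rw [hc, Equiv.swap_apply_of_ne_of_ne hv hw]
    have hpap : ∀ A : Equiv.Perm (Fin n), IsPAP (c * A) ↔ IsPAP A := by
      intro A
      unfold IsPAP
      constructor
      · intro h i hi hne
        exact h i hi (by simpa [Equiv.Perm.mul_apply, hpar] using hne)
      · intro h i hi hne
        exact h i hi (by simpa [Equiv.Perm.mul_apply, hpar] using hne)
    apply Finset.card_bij' (fun A _ => c * A) (fun A _ => c * A)
    · intro A hA
      rw [Finset.mem_filter] at hA ⊢
      exact ⟨Finset.mem_univ _, (hpap A).mpr hA.2.1, (invNum_flip' hvw A).mpr hA.2.2⟩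
    · intro A hA
      rw [Finset.mem_filter] at hA ⊢
      exact ⟨Finset.mem_univ _, (hpap A).mpr hA.2.1, (invNum_flip hvw A).mpr hA.2.2⟩
    · intro A _
      simp [hc, ← mul_assoc]
    · intro A _
      simp [hc, ← mul_assoc]
  · subst h2
    decide
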